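/- Let π, G, V, p, H, G*, K be as in the minimal counterexample setup. Then every minimal normal subgroup of G* is a π-group, and hence is contained in K. -/

import Mathlib

/-- A subgroup is a `π`-group if every prime dividing its order lies in `π`. -/
def IsPiGroup (π : Set ℕ) {G : Type*} [Group G] (H : Subgroup G) : Prop :=
  ∀ p : ℕ, p.Prime → p ∣ Nat.card H → p ∈ π

/-- A subgroup is `π`-maximal if it is a `π`-group not properly contained
in any `π`-subgroup. -/
def IsPiMaximal (π : Set ℕ) {G : Type*} [Group G] (H : Subgroup G) : Prop :=
  IsPiGroup π H ∧ ∀ K : Subgroup G, IsPiGroup π K → H ≤ K → K = H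

/-- `A` is normal in `B` (as subgroups of an ambient group). -/
def NormalIn {G : Type*} [Group G] (A B : Subgroup G) : Prop :=
  A ≤ B ∧ ∀ b ∈ B, ∀ a ∈ A, b * a * b⁻¹ ∈ A

/-- A subgroup is subnormal if it is connected to the whole group by a
finite chain, each term normal in the next. -/
def IsSubnormal {G : Type*} [Group G] (A : Subgroup G) : Prop :=
  Relation.ReflTransGen NormalIn A ⊤

/-- A witness to the `π`-submaximality of `H ≤ G`: a finite group `carrier`,
an embedding `ε : G → carrier` with subnormal image, and a `π`-maximal
subgroup `K` of `carrier` with `ε(H) = ε(G) ∩ K`. -/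
structure PiSubmaximalWitness (π : Set ℕ) (G : Type u) [Group G] (H : Subgroup G) :
    Type (u + 1) where
  carrier : Type u
  [grp : Group carrier]
  [fin : Finite carrier]
  ε : G →* carrier
  inj : Function.Injective ε
  subnormal : IsSubnormal ε.range
  K : Subgroup carrier
  maxK : IsPiMaximal π K
  eq : H.map ε = ε.range ⊓ K

/-- A subgroup `H ≤ G` is `π`-submaximal if `G` embeds as a subnormal subgroup into a
finite group `G*` in which a `π`-maximal subgroup intersects `G` in `H`. -/
def IsPiSubmaximal (π : Set ℕ) {G : Type u} [Group G] (H : Subgroup G) : Prop :=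
  Nonempty (PiSubmaximalWitness π G H)

/-- A minimal normal subgroup: nontrivial, normal, containing no nontrivial
proper normal subgroup of the ambient group. -/
def IsMinimalNormal {G : Type*} [Group G] (U : Subgroup G) : Prop :=
  U.Normal ∧ U ≠ ⊥ ∧ ∀ M : Subgroup G, M.Normal → M ≤ U → M = ⊥ ∨ M = U




section Helpers

open Subgroup

variable {Γ : Type*} [Group Γ]

lemma normalIn_self (M : Subgroup Γ) : NormalIn M M :=
  ⟨le_rfl, fun b hb a ha => M.mul_mem (M.mul_mem hb ha) (M.inv_mem hb)⟩

lemma normalIn_inf {A B M : Subgroup Γ} (hA : NormalIn A M) (hB : NormalIn B M) :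
    NormalIn (A ⊓ B) M := by
  refine ⟨inf_le_left.trans hA.1, fun b hb a ha => ?_⟩
  rw [Subgroup.mem_inf] at ha ⊢
  exact ⟨hA.2 b hb a ha.1, hB.2 b hb a ha.2⟩

lemma normalIn_of_normal {A M : Subgroup Γ} (hA : A.Normal) (h : A ≤ M) : NormalIn A M :=
  ⟨h, fun b _ a ha => hA.conj_mem a ha b⟩

lemma normalIn_top_iff {A : Subgroup Γ} : NormalIn A ⊤ ↔ A.Normal := by
  constructor
  · intro h; exact ⟨fun a ha b => h.2 b trivial a ha⟩
  · intro h; exact normalIn_of_normal h le_top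

lemma subnormal_le {A M : Subgroup Γ} (h : Relation.ReflTransGen NormalIn A M) : A ≤ M := by
  induction h with
  | refl => exact le_rfl
  | tail _ h2 ih => exact ih.trans h2.1

lemma subnormal_step {A M : Subgroup Γ} (h : Relation.ReflTransGen NormalIn A M) :
    A = M ∨ ∃ B, B ≠ M ∧ Relation.ReflTransGen NormalIn A B ∧ NormalIn B M := by
  induction h with
  | refl => exact Or.inl rfl
  | @tail b c hab hbc ih =>
    by_cases hbceq : b = c
    · subst hbceq; exact ih
    · exact Or.inr ⟨b, hbceq, hab, hbc⟩

variable [Finite Γ]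

lemma card_lt_of_lt {A M : Subgroup Γ} (hle : A ≤ M) (hne : A ≠ M) :
    Nat.card A < Nat.card M := by
  have h1 : (A : Set Γ) ⊂ (M : Set Γ) :=
    ssubset_of_subset_of_ne (SetLike.coe_subset_coe.mpr hle)
      (fun h => hne (SetLike.coe_injective h))
  have h2 := Set.ncard_lt_ncard h1 (Set.toFinite _)
  rwa [← Nat.card_coe_set_eq, ← Nat.card_coe_set_eq] at h2

lemma eq_of_le_of_card_le' {A M : Subgroup Γ} (hle : A ≤ M) (hcard : Nat.card M ≤ Nat.card A) :
    A = M := by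
  by_contra hne
  exact absurd hcard (card_lt_of_lt hle hne).not_ge

/-- Minimal subgroup subject to being normal in `M` (relative version). -/
def IsMinNormalIn (N M : Subgroup Γ) : Prop :=
  NormalIn N M ∧ N ≠ ⊥ ∧ ∀ N' : Subgroup Γ, NormalIn N' M → N' ≤ N → N' = ⊥ ∨ N' = N

lemma exists_minNormalIn : ∀ (n : ℕ) (N M : Subgroup Γ), Nat.card N ≤ n →
    NormalIn N M → N ≠ ⊥ → ∃ N₀, N₀ ≤ N ∧ IsMinNormalIn N₀ M := by
  intro n
  induction n with
  | zero =>
    intro N M hle _ _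
    have := Nat.card_pos (α := N)
    omega
  | succ n ih =>
    intro N M hcard hN hne
    by_cases hmin : ∀ N' : Subgroup Γ, NormalIn N' M → N' ≤ N → N' = ⊥ ∨ N' = N
    · exact ⟨N, le_rfl, hN, hne, hmin⟩
    · push_neg at hmin
      obtain ⟨N', hN'M, hN'le, hN'⟩ := hmin
      have hlt : Nat.card N' < Nat.card N := card_lt_of_lt hN'le hN'.2
      obtain ⟨N₀, h1, h2⟩ := ih N' M (by omega) hN'M hN'.1
      exact ⟨N₀, h1.trans hN'le, h2⟩

end Helpers
section Conj
open Subgroup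
variable {Γ : Type*} [Group Γ]

/-- conjugate of a subgroup -/
def cjsub (m : Γ) (A : Subgroup Γ) : Subgroup Γ := A.map (MulAut.conj m).toMonoidHom

lemma mem_cjsub {m x : Γ} {A : Subgroup Γ} : x ∈ cjsub m A ↔ m⁻¹ * x * m ∈ A := by
  simp only [cjsub, Subgroup.mem_map, MulEquiv.coe_toMonoidHom, MulAut.conj_apply]
  constructor
  · rintro ⟨a, ha, rfl⟩; simpa [mul_assoc] using ha
  · intro h; exact ⟨m⁻¹ * x * m, h, by group⟩

lemma cjsub_ne_bot {m : Γ} {A : Subgroup Γ} (h : A ≠ ⊥) : cjsub m A ≠ ⊥ := by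
  intro hbot
  apply h
  rw [Subgroup.eq_bot_iff_forall] at hbot ⊢
  intro a ha
  have : m * a * m⁻¹ ∈ cjsub m A := by rw [mem_cjsub]; simpa [mul_assoc] using ha
  have h1 := hbot _ this
  have : a = m⁻¹ * (m * a * m⁻¹) * m := by group
  rw [this, h1]; group

end Conj
section Wielandt
open Subgroup
variable {Γ : Type*} [Group Γ]

lemma cjsub_bot (m : Γ) : cjsub m (⊥ : Subgroup Γ) = ⊥ := Subgroup.map_bot _

lemma cjsub_cancel (m : Γ) (B : Subgroup Γ) : cjsub m (cjsub m⁻¹ B) = B := by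
  ext x
  rw [mem_cjsub, mem_cjsub]
  have h : (m⁻¹)⁻¹ * (m⁻¹ * x * m) * m⁻¹ = x := by group
  rw [h]

lemma cjsub_normalIn {A N₀ M : Subgroup Γ} (hAM : NormalIn A M) (hN₀ : NormalIn N₀ A)
    {m : Γ} (hm : m ∈ M) : NormalIn (cjsub m N₀) A := by
  constructor
  · intro x hx
    rw [mem_cjsub] at hx
    have h1 : m * (m⁻¹ * x * m) * m⁻¹ ∈ A := hAM.2 m hm _ (hN₀.1 hx)
    have h2 : m * (m⁻¹ * x * m) * m⁻¹ = x := by group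
    rwa [h2] at h1
  · intro a haA x hx
    rw [mem_cjsub] at hx ⊢
    have hb : m⁻¹ * a * m ∈ A := by
      have := hAM.2 m⁻¹ (M.inv_mem hm) a haA
      simpa using this
    have h1 : (m⁻¹ * a * m) * (m⁻¹ * x * m) * (m⁻¹ * a * m)⁻¹ ∈ N₀ :=
      hN₀.2 _ hb _ hx
    have h2 : (m⁻¹ * a * m) * (m⁻¹ * x * m) * (m⁻¹ * a * m)⁻¹ = m⁻¹ * (a * x * a⁻¹) * m := by
      group
    rwa [h2] at h1

lemma cjsub_isMinNormalIn {A N₀ M : Subgroup Γ} (hAM : NormalIn A M)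
    (hmin : IsMinNormalIn N₀ A) {m : Γ} (hm : m ∈ M) : IsMinNormalIn (cjsub m N₀) A := by
  refine ⟨cjsub_normalIn hAM hmin.1 hm, cjsub_ne_bot hmin.2.1, ?_⟩
  intro N' hN'A hN'le
  have hN''A : NormalIn (cjsub m⁻¹ N') A := cjsub_normalIn hAM hN'A (M.inv_mem hm)
  have hN''le : cjsub m⁻¹ N' ≤ N₀ := by
    intro x hx
    rw [mem_cjsub] at hx
    have := hN'le hx
    rw [mem_cjsub] at this
    have h2 : m⁻¹ * ((m⁻¹)⁻¹ * x * m⁻¹) * m = x := by group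
    rwa [h2] at this
  rcases hmin.2.2 _ hN''A hN''le with hbot | heqN
  · left
    have := congrArg (cjsub m) hbot
    rwa [cjsub_cancel, cjsub_bot] at this
  · right
    have := congrArg (cjsub m) heqN
    rwa [cjsub_cancel] at this

variable [Finite Γ]

lemma wielandt : ∀ (k : ℕ) (M N S : Subgroup Γ), Nat.card M ≤ k →
    IsMinNormalIn N M → Relation.ReflTransGen NormalIn S M →
    ∀ n ∈ N, ∀ s ∈ S, n * s * n⁻¹ ∈ S := by
  intro k
  induction k with
  | zero =>
    intro M N S hcard _ _
    exact absurd (Nat.card_pos (α := M)) (by omega)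
  | succ k ih =>
    intro M N S hcardM hN hS
    rcases subnormal_step hS with rfl | ⟨A, hAne, hSA, hAM⟩
    · intro n hn s hs
      exact S.mul_mem (S.mul_mem (hN.1.1 hn) hs) (S.inv_mem (hN.1.1 hn))
    · have hSleA : S ≤ A := subnormal_le hSA
      have hAcard : Nat.card A ≤ k := by
        have := card_lt_of_lt hAM.1 hAne; omega
      by_cases hNA : N ≤ A
      · -- Case a : N ≤ A
        have hNnormA : NormalIn N A := ⟨hNA, fun a haA x hx => hN.1.2 a (hAM.1 haA) x hx⟩
        obtain ⟨N₀, hN₀N, hN₀min⟩ :=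
          exists_minNormalIn (Nat.card N) N A le_rfl hNnormA hN.2.1
        set s : Set Γ := {x | ∃ m ∈ M, x ∈ cjsub m N₀} with hs_def
        set N₁ : Subgroup Γ := Subgroup.closure s with hN₁_def
        have hsN : s ⊆ (N : Set Γ) := by
          rintro x ⟨m, hm, hx⟩
          rw [mem_cjsub] at hx
          have h1 : m * (m⁻¹ * x * m) * m⁻¹ ∈ N := hN.1.2 m hm _ (hN₀N hx)
          have h2 : m * (m⁻¹ * x * m) * m⁻¹ = x := by group
          rwa [h2] at h1
        have hN₁N : N₁ ≤ N := (Subgroup.closure_le N).mpr hsN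
        have hN₀N₁ : N₀ ≤ N₁ := by
          intro x hx
          apply Subgroup.subset_closure
          exact ⟨1, M.one_mem, by rwa [mem_cjsub, inv_one, one_mul, mul_one]⟩
        have hN₁M : NormalIn N₁ M := by
          refine ⟨hN₁N.trans hN.1.1, ?_⟩
          intro b hb a ha
          revert ha
          have key : ∀ a (ha : a ∈ N₁), b * a * b⁻¹ ∈ N₁ := by
            intro a ha
            induction ha using Subgroup.closure_induction with
            | mem x hx =>
              obtain ⟨m, hm, hx⟩ := hx
              apply Subgroup.subset_closure
              refine ⟨b * m, M.mul_mem hb hm, ?_⟩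
              rw [mem_cjsub] at hx ⊢
              have h2 : (b * m)⁻¹ * (b * x * b⁻¹) * (b * m) = m⁻¹ * x * m := by group
              rwa [h2]
            | one => simpa using N₁.one_mem
            | mul x y hxc hyc hx hy =>
              have h2 : b * (x * y) * b⁻¹ = (b * x * b⁻¹) * (b * y * b⁻¹) := by group
              rw [h2]; exact N₁.mul_mem hx hy
            | inv x hxc hx =>
              have h2 : b * x⁻¹ * b⁻¹ = (b * x * b⁻¹)⁻¹ := by group
              rw [h2]; exact N₁.inv_mem hx
          exact fun ha => key a ha
        have hN₁eq : N₁ = N := by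
          rcases hN.2.2 N₁ hN₁M hN₁N with hbot | heq
          · exfalso
            have : N₀ = ⊥ := le_bot_iff.mp (hbot ▸ hN₀N₁)
            exact hN₀min.2.1 this
          · exact heq
        -- now the conclusion via closure induction
        intro n hn t ht
        rw [← hN₁eq] at hn
        have key : ∀ x (hx : x ∈ N₁), (∀ u ∈ S, x * u * x⁻¹ ∈ S ∧ x⁻¹ * u * x ∈ S) := by
          intro x hx
          induction hx using Subgroup.closure_induction with
          | mem x hxs =>
            obtain ⟨m, hm, hxm⟩ := hxs
            intro u hu
            have hone := ih A (cjsub m N₀) S hAcard (cjsub_isMinNormalIn hAM hN₀min hm) hSA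
            constructor
            · exact hone x hxm u hu
            · have := hone x⁻¹ ((cjsub m N₀).inv_mem hxm) u hu
              simpa using this
          | one => intro u hu; constructor <;> simpa using hu
          | mul x y hxc hyc hx hy =>
            intro u hu
            constructor
            · have h1 := (hy u hu).1
              have h2 := (hx _ h1).1
              have h3 : x * (y * u * y⁻¹) * x⁻¹ = (x * y) * u * (x * y)⁻¹ := by group
              rwa [h3] at h2
            · have h1 := (hx u hu).2
              have h2 := (hy _ h1).2
              have h3 : y⁻¹ * (x⁻¹ * u * x) * y = (x * y)⁻¹ * u * (x * y) := by group
              rwa [h3] at h2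
          | inv x hxc hx =>
            intro u hu
            constructor
            · simpa using (hx u hu).2
            · simpa using (hx u hu).1
        exact (key n hn t ht).1
      · -- Case b : ¬ N ≤ A
        have hinf := hN.2.2 (N ⊓ A) (normalIn_inf hN.1 hAM) inf_le_left
        rcases hinf with hbot | heq
        · intro n hn t ht
          have htA : t ∈ A := hSleA ht
          have htM : t ∈ M := hAM.1 htA
          have hcomm : n * t * n⁻¹ * t⁻¹ ∈ N ⊓ A := by
            rw [Subgroup.mem_inf]
            constructor
            · have h1 : t * n⁻¹ * t⁻¹ ∈ N := hN.1.2 t htM n⁻¹ (N.inv_mem hn)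
              have h2 : n * (t * n⁻¹ * t⁻¹) ∈ N := N.mul_mem hn h1
              have h3 : n * (t * n⁻¹ * t⁻¹) = n * t * n⁻¹ * t⁻¹ := by group
              rwa [h3] at h2
            · have h1 : n * t * n⁻¹ ∈ A := hAM.2 n (hN.1.1 hn) t htA
              exact A.mul_mem h1 (A.inv_mem htA)
          rw [hbot, Subgroup.mem_bot] at hcomm
          have h4 : n * t * n⁻¹ = t := by
            have := congrArg (fun z => z * t) hcomm
            simpa [mul_assoc] using this
          rwa [h4]
        · exact absurd (heq ▸ (inf_le_right : N ⊓ A ≤ A)) hNA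

end Wielandt
section PCore
open Subgroup
variable {Γ : Type*} [Group Γ]

lemma le_normalizer_of_normalIn {B A : Subgroup Γ} (h : NormalIn B A) : A ≤ Subgroup.normalizer (B : Set Γ) := by
  intro a ha
  rw [Subgroup.mem_normalizer_iff]
  intro x
  constructor
  · exact fun hx => h.2 a ha x hx
  · intro hx
    have h1 := h.2 a⁻¹ (A.inv_mem ha) _ hx
    have h2 : a⁻¹ * (a * x * a⁻¹) * a⁻¹⁻¹ = x := by group
    rwa [h2] at h1

lemma cjsub_one (B : Subgroup Γ) : cjsub 1 B = B := by
  ext x; rw [mem_cjsub]; simp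

lemma cjsub_sup (b : Γ) (X Y : Subgroup Γ) : cjsub b (X ⊔ Y) = cjsub b X ⊔ cjsub b Y :=
  Subgroup.map_sup _ _ _

lemma cjsub_cjsub (b m : Γ) (B : Subgroup Γ) : cjsub b (cjsub m B) = cjsub (b * m) B := by
  ext x
  rw [mem_cjsub, mem_cjsub, mem_cjsub]
  have h : m⁻¹ * (b⁻¹ * x * b) * m = (b * m)⁻¹ * x * (b * m) := by group
  rw [h]

lemma cjsub_finset_sup {ι : Type*} (b : Γ) (s : Finset ι) (f : ι → Subgroup Γ) :
    cjsub b (s.sup f) = s.sup (fun i => cjsub b (f i)) := by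
  classical
  induction s using Finset.induction with
  | empty => simpa using cjsub_bot b
  | insert _ _ ha ih => rw [Finset.sup_insert, Finset.sup_insert, cjsub_sup, ih]

variable [Finite Γ]

lemma exists_normal_pgroup {p : ℕ} : ∀ (k : ℕ) (M P : Subgroup Γ), Nat.card M ≤ k →
    Relation.ReflTransGen NormalIn P M → IsPGroup p P →
    ∃ W : Subgroup Γ, NormalIn W M ∧ IsPGroup p W ∧ P ≤ W := by
  intro k
  induction k with
  | zero =>
    intro M P hcard _ _
    exact absurd (Nat.card_pos (α := M)) (by omega)
  | succ k ih =>
    intro M P hcardM hP hPp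
    rcases subnormal_step hP with rfl | ⟨A, hAne, hPA, hAM⟩
    · exact ⟨P, normalIn_self P, hPp, le_rfl⟩
    · have hAcard : Nat.card A ≤ k := by
        have := card_lt_of_lt hAM.1 hAne; omega
      obtain ⟨W', hW'A, hW'p, hPW'⟩ := ih A P hAcard hPA hPp
      classical
      haveI : Fintype (↥M) := Fintype.ofFinite _
      set f : ↥M → Subgroup Γ := fun m => cjsub (↑m) W' with hf_def
      set W : Subgroup Γ := Finset.univ.sup f with hW_def
      have hfA : ∀ m : ↥M, NormalIn (f m) A := fun m => cjsub_normalIn hAM hW'A m.2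
      have hWA : W ≤ A := Finset.sup_le (fun m _ => (hfA m).1)
      have hWp : ∀ s : Finset ↥M, IsPGroup p ↑(s.sup f) := by
        intro s
        induction s using Finset.induction with
        | empty => rw [Finset.sup_empty]; exact IsPGroup.of_bot
        | insert a s' hnotmem ihs =>
          rw [Finset.sup_insert]
          have hfp : IsPGroup p (f a) := hW'p.map _
          refine IsPGroup.to_sup_of_normal_left' hfp ihs ?_
          exact (Finset.sup_le (fun m _ => (hfA m).1)).trans
            (le_normalizer_of_normalIn (hfA a))
      refine ⟨W, ⟨hWA.trans hAM.1, ?_⟩, hWp _, ?_⟩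
      · intro b hb x hx
        have hle : cjsub b W ≤ W := by
          rw [hW_def, cjsub_finset_sup]
          apply Finset.sup_le
          intro m _
          have : cjsub b (f m) = f ⟨b * ↑m, M.mul_mem hb m.2⟩ := cjsub_cjsub b (↑m) W'
          rw [this]
          exact Finset.le_sup (Finset.mem_univ _)
        apply hle
        rw [mem_cjsub]
        have h2 : b⁻¹ * (b * x * b⁻¹) * b = x := by group
        rwa [h2]
      · have : f ⟨1, M.one_mem⟩ = W' := cjsub_one W'
        calc P ≤ W' := hPW'
          _ = f ⟨1, M.one_mem⟩ := this.symm
          _ ≤ W := Finset.le_sup (Finset.mem_univ _)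

end PCore
section PiUtil
open Subgroup

/-- all prime divisors of `n` lie in `π` -/
def PiNat (π : Set ℕ) (n : ℕ) : Prop := ∀ r : ℕ, r.Prime → r ∣ n → r ∈ π

lemma isPiGroup_iff_piNat {π : Set ℕ} {Γ : Type*} [Group Γ] (A : Subgroup Γ) :
    IsPiGroup π A ↔ PiNat π (Nat.card A) := Iff.rfl

lemma PiNat.of_dvd {π : Set ℕ} {m n : ℕ} (h : PiNat π n) (hd : m ∣ n) : PiNat π m :=
  fun r hr hrm => h r hr (hrm.trans hd)

lemma isPiGroup_of_card_dvd {π : Set ℕ} {Γ Δ : Type*} [Group Γ] [Group Δ]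
    {A : Subgroup Γ} {B : Subgroup Δ} (hB : IsPiGroup π B) (h : Nat.card A ∣ Nat.card B) :
    IsPiGroup π A := fun r hr hrd => hB r hr (hrd.trans h)

variable {Γ : Type*} [Group Γ]

lemma card_subgroupOf {A L : Subgroup Γ} (h : A ≤ L) :
    Nat.card (A.subgroupOf L) = Nat.card A :=
  Nat.card_congr (Subgroup.subgroupOfEquivOfLe h).toEquiv

lemma card_map_of_injective {Δ : Type*} [Group Δ] (A : Subgroup Γ) (f : Γ →* Δ)
    (hf : Function.Injective f) : Nat.card (A.map f) = Nat.card A :=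
  (Nat.card_congr (Subgroup.equivMapOfInjective A f hf).toEquiv).symm

lemma card_map_dvd [Finite Γ] {Δ : Type*} [Group Δ] (A : Subgroup Γ) (f : Γ →* Δ) :
    Nat.card (A.map f) ∣ Nat.card A := by
  have h1 : (f.comp A.subtype).range = A.map f := by
    rw [MonoidHom.range_comp, Subgroup.range_subtype]
  rw [← h1]
  have h2 := Nat.card_congr
    (QuotientGroup.quotientKerEquivRange (f.comp A.subtype)).toEquiv
  rw [← h2]
  exact Subgroup.card_quotient_dvd_card _

variable [Finite Γ]

lemma pi_sup_normal {π : Set ℕ} (A B : Subgroup Γ) [hB : B.Normal]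
    (hA : IsPiGroup π A) (hBpi : IsPiGroup π B) : IsPiGroup π (A ⊔ B) := by
  have hcard : Nat.card (A ⊔ B : Subgroup Γ) ∣ Nat.card A * Nat.card B := by
    have h1 := Subgroup.card_eq_card_quotient_mul_card_subgroup
      (B.subgroupOf (A ⊔ B) : Subgroup (A ⊔ B : Subgroup Γ))
    have h2 : Nat.card (B.subgroupOf (A ⊔ B)) = Nat.card B := card_subgroupOf le_sup_right
    have h3 := Nat.card_congr
      (QuotientGroup.quotientInfEquivProdNormalQuotient A B).toEquiv
    have h4 : Nat.card (↥A ⧸ (B.subgroupOf A)) ∣ Nat.card A :=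
      Subgroup.card_quotient_dvd_card _
    rw [h1, h2, ← h3]
    exact Nat.mul_dvd_mul h4 dvd_rfl
  intro r hr hrd
  rcases (Nat.Prime.dvd_mul hr).mp (hrd.trans hcard) with h | h
  · exact hA r hr h
  · exact hBpi r hr h

lemma normal_pi_le_piMaximal {π : Set ℕ} {U K : Subgroup Γ} (hUn : U.Normal)
    (hU : IsPiGroup π U) (hK : IsPiMaximal π K) : U ≤ K := by
  haveI := hUn
  have hsup := pi_sup_normal K U hK.1 hU
  have heq := hK.2 (K ⊔ U) hsup le_sup_left
  rw [← heq]
  exact le_sup_right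

lemma exists_piMaximal_le {π : Set ℕ} (P : Subgroup Γ) (hP : IsPiGroup π P) :
    ∃ Q : Subgroup Γ, IsPiMaximal π Q ∧ P ≤ Q := by
  haveI : Finite (Subgroup Γ) :=
    Finite.of_injective (fun A : Subgroup Γ => (A : Set Γ)) SetLike.coe_injective
  set s : Set (Subgroup Γ) := {Q | IsPiGroup π Q ∧ P ≤ Q} with hs_def
  obtain ⟨Q, hQs, hQmax⟩ := Set.Finite.exists_maximalFor
    (fun Q : Subgroup Γ => Nat.card Q) s (Set.toFinite s) ⟨P, hP, le_rfl⟩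
  refine ⟨Q, ⟨hQs.1, ?_⟩, hQs.2⟩
  intro R hR hQR
  have hPR : P ≤ R := hQs.2.trans hQR
  have hcardeq := le_antisymm (Subgroup.card_le_of_le hQR) (hQmax ⟨hR, hPR⟩ (Subgroup.card_le_of_le hQR))
  exact (eq_of_le_of_card_le' hQR (le_of_eq hcardeq.symm)).symm

lemma isPiGroup_of_isPGroup {π : Set ℕ} {p : ℕ} (hp : p.Prime) (hpπ : p ∈ π)
    {U : Subgroup Γ} (hU : IsPGroup p U) : IsPiGroup π U := by
  intro r hr hrd
  haveI := Fact.mk hr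
  obtain ⟨x, hx⟩ := exists_prime_orderOf_dvd_card' (G := ↥U) r hrd
  obtain ⟨n, hn⟩ := hU x
  have h1 : orderOf x ∣ p ^ n := orderOf_dvd_of_pow_eq_one hn
  rw [hx] at h1
  have : r = p := (Nat.prime_dvd_prime_iff_eq hr hp).mp (hr.dvd_of_dvd_pow h1)
  rwa [this]

end PiUtil

section SubnormalTransfer
open Subgroup

lemma normalIn_map {Γ Δ : Type*} [Group Γ] [Group Δ] (f : Γ →* Δ) {A B : Subgroup Γ}
    (h : NormalIn A B) : NormalIn (A.map f) (B.map f) := by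
  constructor
  · exact Subgroup.map_mono h.1
  · rintro y ⟨b, hb, rfl⟩ x ⟨a, ha, rfl⟩
    exact ⟨b * a * b⁻¹, h.2 b hb a ha, by simp⟩

lemma subnormal_map {Γ Δ : Type*} [Group Γ] [Group Δ] (f : Γ →* Δ)
    (hf : Function.Surjective f) {A : Subgroup Γ}
    (h : Relation.ReflTransGen NormalIn A ⊤) :
    Relation.ReflTransGen NormalIn (A.map f) ⊤ := by
  have h1 := Relation.ReflTransGen.lift (Subgroup.map f)
    (fun a b hab => normalIn_map f hab) _ _ h
  rwa [Function.onFun, Subgroup.map_top_of_surjective f hf] at h1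

lemma normalIn_subgroupOf {Γ : Type*} [Group Γ] (S : Subgroup Γ) {A B : Subgroup Γ}
    (h : NormalIn A B) : NormalIn ((A ⊓ S).subgroupOf S) ((B ⊓ S).subgroupOf S) := by
  constructor
  · intro x hx
    rw [Subgroup.mem_subgroupOf] at hx ⊢
    rw [Subgroup.mem_inf] at hx ⊢
    exact ⟨h.1 hx.1, hx.2⟩
  · intro b hb a ha
    rw [Subgroup.mem_subgroupOf, Subgroup.mem_inf] at hb ha ⊢
    exact ⟨h.2 _ hb.1 _ ha.1, S.mul_mem (S.mul_mem hb.2 ha.2) (S.inv_mem hb.2)⟩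

lemma subnormal_subgroupOf {Γ : Type*} [Group Γ] {A S : Subgroup Γ}
    (h : Relation.ReflTransGen NormalIn A ⊤) (hAS : A ≤ S) :
    Relation.ReflTransGen NormalIn (A.subgroupOf S) ⊤ := by
  have h1 := Relation.ReflTransGen.lift (fun B : Subgroup Γ => (B ⊓ S).subgroupOf S)
    (fun a b hab => normalIn_subgroupOf S hab) _ _ h
  have h2 : (A ⊓ S) = A := inf_eq_left.mpr hAS
  have h3 : ((⊤ ⊓ S : Subgroup Γ)).subgroupOf S = ⊤ := by
    rw [top_inf_eq, Subgroup.subgroupOf_self]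
  simp only [Function.onFun, h2, h3] at h1
  exact h1

end SubnormalTransfer
section MainAux
open Subgroup

variable {Γ : Type*} [Group Γ] [Finite Γ]

lemma exists_isMinimalNormal_le {N : Subgroup Γ} (hN : N.Normal) (hne : N ≠ ⊥) :
    ∃ E : Subgroup Γ, E ≤ N ∧ IsMinimalNormal E := by
  obtain ⟨N₀, hle, hmin⟩ := exists_minNormalIn (Nat.card N) N ⊤ le_rfl
    ⟨le_top, fun b _ a ha => hN.conj_mem a ha b⟩ hne
  refine ⟨N₀, hle, ?_, hmin.2.1, ?_⟩
  · exact ⟨fun a ha b => hmin.1.2 b trivial a ha⟩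
  · intro M' hM' hle'
    exact hmin.2.2 M' ⟨le_top, fun b _ a ha => hM'.conj_mem a ha b⟩ hle'

lemma minimalNormal_normalizes {U S : Subgroup Γ} (hU : IsMinimalNormal U)
    (hS : Relation.ReflTransGen NormalIn S ⊤) : ∀ n ∈ U, ∀ s ∈ S, n * s * n⁻¹ ∈ S :=
  wielandt (Nat.card ((⊤ : Subgroup Γ))) ⊤ U S le_rfl
    ⟨⟨le_top, fun b _ a ha => hU.1.conj_mem a ha b⟩, hU.2.1,
      fun N' h hle => hU.2.2 N' ⟨fun a ha b => h.2 b trivial a ha⟩ hle⟩ hS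

end MainAux

open scoped Pointwise in
/-- In the minimal counterexample setup, every minimal normal subgroup of `G*` is a
`π`-group and is contained in `K`. -/
theorem stmt12 {G : Type} [Group G] [Finite G] (π : Set ℕ) (p : ℕ)
    (hp : p.Prime) (hpπ : p ∈ π)
    (V : Subgroup G) [nV : V.Normal]
    (hVmin : IsMinimalNormal V)
    (hVuniq : ∀ U : Subgroup G, IsMinimalNormal U → U = V)
    (hVp : IsPGroup p V)
    (hVZ : ¬ V ≤ Subgroup.center G)
    (hsimple : IsSimpleGroup (G ⧸ V))
    (hnonab : ∃ a b : G ⧸ V, a * b ≠ b * a)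
    (H : Subgroup G) (hH : IsPiSubmaximal π H)
    (Gstar : Type) [Group Gstar] [Finite Gstar]
    (ε : G →* Gstar) (hinj : Function.Injective ε) (hsub : IsSubnormal ε.range)
    (K : Subgroup Gstar) (hK : IsPiMaximal π K) (heq : H.map ε = ε.range ⊓ K)
    (hmin : ∀ w : PiSubmaximalWitness π G H, Nat.card Gstar ≤ Nat.card w.carrier) :
    ∀ U : Subgroup Gstar, IsMinimalNormal U → IsPiGroup π U ∧ U ≤ K := by
  classical
  -- Step 0: `ε.range ⊔ K = ⊤`, via minimality of `Gstar`.
  have htop : ε.range ⊔ K = ⊤ := by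
    set S : Subgroup Gstar := ε.range ⊔ K with hS_def
    have hRS : ε.range ≤ S := le_sup_left
    have hKS : K ≤ S := le_sup_right
    have hεS : ∀ g : G, ε g ∈ S := fun g => hRS ⟨g, rfl⟩
    set εS : G →* ↥S := ε.codRestrict S hεS with hεS_def
    have hcoe : ∀ g : G, ((εS g : ↥S) : Gstar) = ε g := fun g => rfl
    have hinjS : Function.Injective εS := by
      intro a b hab
      apply hinj
      rw [← hcoe a, ← hcoe b, hab]
    have hrangeS : εS.range = ε.range.subgroupOf S := by
      ext x
      rw [MonoidHom.mem_range, Subgroup.mem_subgroupOf]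
      constructor
      · rintro ⟨g, rfl⟩; exact ⟨g, rfl⟩
      · rintro ⟨g, hg⟩; exact ⟨g, Subtype.ext hg⟩
    have hsnS : Relation.ReflTransGen NormalIn εS.range ⊤ := by
      rw [hrangeS]; exact subnormal_subgroupOf hsub hRS
    set KS : Subgroup ↥S := K.subgroupOf S with hKS_def
    have hKScard : Nat.card KS = Nat.card K := card_subgroupOf hKS
    have hmaxS : IsPiMaximal π KS := by
      constructor
      · exact isPiGroup_of_card_dvd hK.1 hKScard.dvd
      · intro Q hQ hKQ
        set Qm : Subgroup Gstar := Q.map S.subtype with hQm_def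
        have hQmpi : IsPiGroup π Qm :=
          isPiGroup_of_card_dvd hQ (card_map_of_injective Q S.subtype S.subtype_injective).dvd
        have hKmap : KS.map S.subtype = K := by
          rw [hKS_def, Subgroup.subgroupOf_map_subtype, inf_eq_left.mpr hKS]
        have hKQm : K ≤ Qm := by
          rw [← hKmap]; exact Subgroup.map_mono hKQ
        have hQmK := hK.2 Qm hQmpi hKQm
        apply Subgroup.map_injective S.subtype_injective
        rw [hQm_def] at hQmK
        rw [hQmK, hKmap]
    have heqS : H.map εS = εS.range ⊓ KS := by
      ext x
      rw [Subgroup.mem_inf, hrangeS, Subgroup.mem_subgroupOf, Subgroup.mem_subgroupOf]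
      constructor
      · rintro ⟨h, hh, rfl⟩
        have hx : ε h ∈ H.map ε := ⟨h, hh, rfl⟩
        rw [heq, Subgroup.mem_inf] at hx
        exact ⟨hx.1, hx.2⟩
      · rintro ⟨hxr, hxK⟩
        have : (x : Gstar) ∈ H.map ε := by
          rw [heq, Subgroup.mem_inf]; exact ⟨hxr, hxK⟩
        obtain ⟨h, hh, hεh⟩ := this
        exact ⟨h, hh, Subtype.ext hεh⟩
    let w : PiSubmaximalWitness π G H :=
      { carrier := ↥S
        grp := inferInstance
        fin := inferInstance
        ε := εS
        inj := hinjS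
        subnormal := hsnS
        K := KS
        maxK := hmaxS
        eq := heqS }
    have h1 := hmin w
    have h2 : Nat.card ↥S ≤ Nat.card Gstar := Subgroup.card_le_card_group S
    exact Subgroup.eq_top_of_card_eq S (le_antisymm h2 h1)
  -- Step 1 : a normal p-subgroup W containing ε(V)
  have hVrange : V.map ε ≤ ε.range := by
    rintro x ⟨v, hv, rfl⟩; exact ⟨v, rfl⟩
  have hVnormR : NormalIn (V.map ε) ε.range := by
    refine ⟨hVrange, ?_⟩
    rintro y ⟨g, rfl⟩ x ⟨v, hv, rfl⟩
    exact ⟨g * v * g⁻¹, nV.conj_mem v hv g, by simp⟩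
  have hVsub : Relation.ReflTransGen NormalIn (V.map ε) ⊤ :=
    Relation.ReflTransGen.head hVnormR hsub
  obtain ⟨W, hWnorm, hWp, hVW⟩ :=
    exists_normal_pgroup (p := p) (Nat.card ((⊤ : Subgroup Gstar))) ⊤ (V.map ε)
      le_rfl hVsub (hVp.map ε)
  intro U hU
  have hUn : U.Normal := hU.1
  haveI := hUn
  have hUpi : IsPiGroup π U := by
    by_cases hUW : U ⊓ W = ⊥
    · -- Case II :
      have hUR : U ⊓ ε.range = ⊥ := by
        by_contra hne
        set D' : Subgroup G := (U ⊓ ε.range).comap ε with hD'_def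
        have hD'n : D'.Normal := by
          constructor
          intro a ha g
          rw [hD'_def, Subgroup.mem_comap] at ha ⊢
          rw [Subgroup.mem_inf] at ha ⊢
          constructor
          · rw [map_mul, map_mul, map_inv]
            exact hUn.conj_mem _ ha.1 (ε g)
          · exact ⟨g * a * g⁻¹, rfl⟩
        have hD'ne : D' ≠ ⊥ := by
          intro hbot
          rcases (U ⊓ ε.range).bot_or_exists_ne_one with hb | ⟨x, hx, hxne⟩
          · exact hne hb
          · rw [Subgroup.mem_inf] at hx
            obtain ⟨g, rfl⟩ := hx.2
            have hgD' : g ∈ D' := by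
              rw [hD'_def, Subgroup.mem_comap, Subgroup.mem_inf]
              exact ⟨hx.1, ⟨g, rfl⟩⟩
            rw [hbot, Subgroup.mem_bot] at hgD'
            rw [hgD'] at hxne
            exact hxne (map_one ε)
        obtain ⟨E, hEle, hEmin⟩ := exists_isMinimalNormal_le hD'n hD'ne
        have hEV : E = V := hVuniq E hEmin
        have hVD' : V ≤ D' := hEV ▸ hEle
        have h1 : V.map ε ≤ U ⊓ ε.range := by
          calc V.map ε ≤ ((U ⊓ ε.range).comap ε).map ε := Subgroup.map_mono hVD'
            _ ≤ U ⊓ ε.range := Subgroup.map_comap_le _ _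
        have h2 : V.map ε ≤ U ⊓ W := le_inf (h1.trans inf_le_left) hVW
        rw [hUW] at h2
        have h3 : V.map ε = ⊥ := le_bot_iff.mp h2
        rw [Subgroup.map_eq_bot_iff_of_injective _ hinj] at h3
        exact hVmin.2.1 h3
      have hcomm : ∀ u ∈ U, ∀ x ∈ ε.range, u * x = x * u := by
        intro u hu x hx
        have h1 : u * x * u⁻¹ ∈ ε.range := minimalNormal_normalizes hU hsub u hu x hx
        have h2 : u * x * u⁻¹ * x⁻¹ ∈ ε.range := ε.range.mul_mem h1 (ε.range.inv_mem hx)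
        have h3 : u * x * u⁻¹ * x⁻¹ ∈ U := by
          have h4 : x * u⁻¹ * x⁻¹ ∈ U := hUn.conj_mem u⁻¹ (U.inv_mem hu) x
          have h5 : u * (x * u⁻¹ * x⁻¹) ∈ U := U.mul_mem hu h4
          have h6 : u * (x * u⁻¹ * x⁻¹) = u * x * u⁻¹ * x⁻¹ := by group
          rwa [h6] at h5
        have h7 : u * x * u⁻¹ * x⁻¹ ∈ U ⊓ ε.range := Subgroup.mem_inf.mpr ⟨h3, h2⟩
        rw [hUR, Subgroup.mem_bot] at h7
        have h8 : u * x * u⁻¹ = x := mul_inv_eq_one.mp h7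
        have h9 := congrArg (fun z => z * u) h8
        simpa [mul_assoc] using h9
      set C : Subgroup Gstar := Subgroup.centralizer (U : Set Gstar) with hC_def
      have hrangeC : ε.range ≤ C := by
        intro x hx
        rw [hC_def, Subgroup.mem_centralizer_iff]
        intro u hu
        exact hcomm u hu x hx
      have hCn : C.Normal := by
        constructor
        intro c hc g
        rw [hC_def, Subgroup.mem_centralizer_iff] at hc ⊢
        intro u hu
        have h1 : g⁻¹ * u * g ∈ U := by
          have := hUn.conj_mem u hu g⁻¹
          simpa using this
        have h2 := hc _ h1
        have h3 := congrArg (fun z => g * z * g⁻¹) h2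
        have h4 : g * (g⁻¹ * u * g * c) * g⁻¹ = u * (g * c * g⁻¹) := by group
        have h5 : g * (c * (g⁻¹ * u * g)) * g⁻¹ = g * c * g⁻¹ * u := by group
        rw [h4, h5] at h3
        exact h3
      haveI := hCn
      have hCK : C ⊔ K = ⊤ := by
        rw [eq_top_iff, ← htop]
        exact sup_le_sup_right hrangeC K
      have hquotpi : PiNat π (Nat.card (Gstar ⧸ C)) := by
        set ψ : ↥K →* Gstar ⧸ C := (QuotientGroup.mk' C).comp K.subtype with hψ_def
        have hψsurj : Function.Surjective ψ := by
          intro y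
          obtain ⟨x, rfl⟩ := QuotientGroup.mk'_surjective C y
          have hx : x ∈ C ⊔ K := by rw [hCK]; trivial
          have hx2 : x ∈ ((C : Set Gstar) * (K : Set Gstar)) := by
            rw [← Subgroup.normal_mul C K]
            exact SetLike.mem_coe.mpr hx
          rw [Set.mem_mul] at hx2
          obtain ⟨c, hc, k, hk, rfl⟩ := hx2
          refine ⟨⟨k, hk⟩, ?_⟩
          show QuotientGroup.mk k = QuotientGroup.mk (c * k)
          rw [QuotientGroup.eq]
          have h9 := hCn.conj_mem c hc k⁻¹
          have h10 : k⁻¹ * c * k⁻¹⁻¹ = k⁻¹ * (c * k) := by group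
          rwa [h10] at h9
        have hdvd : Nat.card (Gstar ⧸ C) ∣ Nat.card K := by
          have h1 := Nat.card_congr
            (QuotientGroup.quotientKerEquivOfSurjective ψ hψsurj).toEquiv
          rw [← h1]
          exact Subgroup.card_quotient_dvd_card _
        exact fun r hr hrd => hK.1 r hr (hrd.trans hdvd)
      have hUCn : (U ⊓ C).Normal := by
        constructor
        intro a ha g
        rw [Subgroup.mem_inf] at ha ⊢
        exact ⟨hUn.conj_mem a ha.1 g, hCn.conj_mem a ha.2 g⟩
      rcases hU.2.2 (U ⊓ C) hUCn inf_le_left with hUC | hUC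
      · -- Case II.a : U embeds into Gstar / C
        set φ : ↥U →* Gstar ⧸ C := (QuotientGroup.mk' C).comp U.subtype with hφ_def
        have hφinj : Function.Injective φ := by
          intro a b hab
          have h1 : ((a : Gstar)⁻¹ * b : Gstar) ∈ C := by
            rw [← QuotientGroup.eq]
            exact hab
          have h2 : ((a : Gstar)⁻¹ * b : Gstar) ∈ U := U.mul_mem (U.inv_mem a.2) b.2
          have h3 : ((a : Gstar)⁻¹ * b : Gstar) ∈ U ⊓ C := Subgroup.mem_inf.mpr ⟨h2, h1⟩
          rw [hUC, Subgroup.mem_bot] at h3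
          have := inv_mul_eq_one.mp h3
          exact Subtype.ext this
        have hdvd : Nat.card U ∣ Nat.card (Gstar ⧸ C) := by
          have h1 : Nat.card U = Nat.card φ.range :=
            Nat.card_congr (MonoidHom.ofInjective hφinj).toEquiv
          rw [h1]
          exact Subgroup.card_subgroup_dvd_card _
        exact fun r hr hrd => hquotpi r hr (hrd.trans hdvd)
      · -- Case II.b
        have hUC' : U ≤ C := by rw [← hUC]; exact inf_le_right
        intro r hr hrd
        by_contra hrπ
        have hUab : ∀ u ∈ U, ∀ v ∈ U, u * v = v * u := by
          intro u hu v hv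
          exact Subgroup.mem_centralizer_iff.mp (hUC' hv) u hu
        haveI hrfact := Fact.mk hr
        set Ur : Subgroup Gstar :=
          { carrier := {x : Gstar | x ∈ U ∧ x ^ r = 1}
            one_mem' := ⟨U.one_mem, one_pow r⟩
            mul_mem' := by
              rintro a b ⟨haU, har⟩ ⟨hbU, hbr⟩
              refine ⟨U.mul_mem haU hbU, ?_⟩
              have hcab : Commute a b := hUab a haU b hbU
              rw [hcab.mul_pow, har, hbr, one_mul]
            inv_mem' := by
              rintro a ⟨haU, har⟩
              exact ⟨U.inv_mem haU, by rw [inv_pow, har, inv_one]⟩ } with hUr_def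
        have hUrn : Ur.Normal := by
          constructor
          intro a ha g
          obtain ⟨haU, har⟩ := ha
          refine ⟨hUn.conj_mem a haU g, ?_⟩
          rw [conj_pow, har]
          simp
        have hUrne : Ur ≠ ⊥ := by
          obtain ⟨x, hx⟩ := exists_prime_orderOf_dvd_card' (G := ↥U) r hrd
          have hxord : orderOf ((x : ↥U) : Gstar) = r :=
            (orderOf_injective U.subtype Subtype.coe_injective x).trans hx
          intro hbot
          have hmem : ((x : ↥U) : Gstar) ∈ Ur :=
            ⟨x.2, by rw [← hxord]; exact pow_orderOf_eq_one _⟩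
          rw [hbot, Subgroup.mem_bot] at hmem
          rw [hmem, orderOf_one] at hxord
          exact hr.one_lt.ne hxord
        have hUrle : Ur ≤ U := fun x hx => hx.1
        have hUrU : Ur = U := (hU.2.2 Ur hUrn hUrle).resolve_left hUrne
        have hUexp : ∀ u ∈ U, u ^ r = 1 := by
          intro u hu
          have h1 : u ∈ Ur := by rw [hUrU]; exact hu
          exact h1.2
        set ρ : Gstar →* Gstar ⧸ U := QuotientGroup.mk' U with hρ_def
        have hρsurj : Function.Surjective ρ := QuotientGroup.mk'_surjective U
        set ε' : G →* Gstar ⧸ U := ρ.comp ε with hε'_def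
        have hUmem_of : ∀ x : Gstar, ρ x = 1 → x ∈ U :=
          fun x hx => (QuotientGroup.eq_one_iff x).mp hx
        have hinj' : Function.Injective ε' := by
          intro a b hab
          have h1 : ρ ((ε a)⁻¹ * ε b) = 1 := by
            rw [map_mul, map_inv, show ρ (ε a) = ρ (ε b) from hab]
            simp
          have h2 : (ε a)⁻¹ * ε b ∈ U := hUmem_of _ h1
          have h3 : (ε a)⁻¹ * ε b ∈ ε.range :=
            ε.range.mul_mem (ε.range.inv_mem ⟨a, rfl⟩) ⟨b, rfl⟩
          have h4 : (ε a)⁻¹ * ε b ∈ U ⊓ ε.range := Subgroup.mem_inf.mpr ⟨h2, h3⟩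
          rw [hUR, Subgroup.mem_bot] at h4
          exact hinj (inv_mul_eq_one.mp h4)
        have hrange' : ε'.range = ε.range.map ρ := MonoidHom.range_comp ρ ε
        have hsub' : Relation.ReflTransGen NormalIn ε'.range ⊤ := by
          rw [hrange']
          exact subnormal_map ρ hρsurj hsub
        obtain ⟨Kb, hKbmax, hKKb⟩ := exists_piMaximal_le (K.map ρ)
          (isPiGroup_of_card_dvd hK.1 (card_map_dvd K ρ))
        set L : Subgroup Gstar := Kb.comap ρ with hL_def
        have hKL : K ≤ L := Subgroup.map_le_iff_le_comap.mp hKKb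
        have hUL : U ≤ L := by
          intro u hu
          rw [hL_def, Subgroup.mem_comap]
          have h1 : ρ u = 1 := (QuotientGroup.eq_one_iff u).mpr hu
          rw [h1]
          exact Kb.one_mem
        have hmapL : L.map ρ ≤ Kb := Subgroup.map_comap_le ρ Kb
        have hinjρ : ∀ X : Subgroup Gstar, X ≤ L → X ⊓ U = ⊥ →
            Nat.card X ∣ Nat.card Kb := by
          intro X hXL hXU
          set gX : ↥X →* Gstar ⧸ U := ρ.comp X.subtype with hgX_def
          have hginj : Function.Injective gX := by
            intro a b hab
            have h1 : ρ ((a : Gstar)⁻¹ * b) = 1 := by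
              rw [map_mul, map_inv, show ρ (a : Gstar) = ρ (b : Gstar) from hab]
              simp
            have h2 : ((a : Gstar)⁻¹ * b) ∈ U := hUmem_of _ h1
            have h3 : ((a : Gstar)⁻¹ * b) ∈ X := X.mul_mem (X.inv_mem a.2) b.2
            have h4 : ((a : Gstar)⁻¹ * b) ∈ X ⊓ U := Subgroup.mem_inf.mpr ⟨h3, h2⟩
            rw [hXU, Subgroup.mem_bot] at h4
            exact Subtype.ext (inv_mul_eq_one.mp h4)
          have h5 : Nat.card X = Nat.card gX.range :=
            Nat.card_congr (MonoidHom.ofInjective hginj).toEquiv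
          have h6 : gX.range = X.map ρ := by
            rw [hgX_def, MonoidHom.range_comp, Subgroup.range_subtype]
          have h7 : X.map ρ ≤ Kb := (Subgroup.map_mono hXL).trans hmapL
          rw [h5, h6]
          exact Subgroup.card_dvd_of_le h7
        set LC : Subgroup Gstar := L ⊓ C with hLC_def
        have hULC : U ≤ LC := le_inf hUL hUC'
        set U' : Subgroup ↥LC := U.subgroupOf LC with hU'_def
        haveI hU'n : U'.Normal := hUn.subgroupOf LC
        have hU'card : Nat.card U' = Nat.card U := card_subgroupOf hULC
        set g0 : ↥LC →* Gstar ⧸ U := ρ.comp LC.subtype with hg0_def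
        have hg0ker : g0.ker = U' := by
          ext x
          rw [MonoidHom.mem_ker, hU'_def, Subgroup.mem_subgroupOf]
          constructor
          · intro hx; exact hUmem_of _ hx
          · intro hx; exact (QuotientGroup.eq_one_iff _).mpr hx
        have hg0range : g0.range = LC.map ρ := by
          rw [hg0_def, MonoidHom.range_comp, Subgroup.range_subtype]
        have hLCcard : Nat.card ↥LC = Nat.card (LC.map ρ) * Nat.card U := by
          have h1 := Subgroup.card_eq_card_quotient_mul_card_subgroup (g0.ker)
          have h2 : Nat.card (↥LC ⧸ g0.ker) = Nat.card g0.range :=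
            Nat.card_congr (QuotientGroup.quotientKerEquivRange g0).toEquiv
          rw [h1, h2, hg0range, hg0ker, hU'card]
        have hρLCKb : LC.map ρ ≤ Kb := (Subgroup.map_mono inf_le_left).trans hmapL
        have hρLCdvd : Nat.card (LC.map ρ) ∣ Nat.card Kb := Subgroup.card_dvd_of_le hρLCKb
        have hindex : U'.index = Nat.card (LC.map ρ) := by
          have h1 := Subgroup.card_mul_index U'
          rw [hU'card] at h1
          have h2 : 0 < Nat.card U := Nat.card_pos
          have h3 : Nat.card U * U'.index = Nat.card U * Nat.card (LC.map ρ) := by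
            rw [h1, hLCcard]
            ring
          exact Nat.eq_of_mul_eq_mul_left h2 h3
        have hcop : Nat.Coprime (Nat.card U') U'.index := by
          by_contra hnc
          obtain ⟨s, hs, hs1, hs2⟩ := Nat.Prime.not_coprime_iff_dvd.mp hnc
          rw [hU'card] at hs1
          haveI := Fact.mk hs
          obtain ⟨x, hx⟩ := exists_prime_orderOf_dvd_card' (G := ↥U) s hs1
          have hxord : orderOf ((x : ↥U) : Gstar) = s :=
            (orderOf_injective U.subtype Subtype.coe_injective x).trans hx
          have hdvdr : orderOf ((x : ↥U) : Gstar) ∣ r :=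
            orderOf_dvd_of_pow_eq_one (hUexp _ x.2)
          rw [hxord] at hdvdr
          have hsr : s = r := (Nat.prime_dvd_prime_iff_eq hs hr).mp hdvdr
          rw [hindex] at hs2
          have hsπ : s ∈ π := hKbmax.1 s hs (hs2.trans hρLCdvd)
          rw [hsr] at hsπ
          exact hrπ hsπ
        obtain ⟨T₀, hT₀⟩ := Subgroup.exists_right_complement'_of_coprime hcop
        set T : Subgroup Gstar := T₀.map LC.subtype with hT_def
        have hTLC : T ≤ LC := Subgroup.map_subtype_le T₀
        have hTU : T ⊓ U = ⊥ := by
          rw [Subgroup.eq_bot_iff_forall]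
          intro x hx
          rw [Subgroup.mem_inf] at hx
          obtain ⟨hxT, hxU⟩ := hx
          rw [hT_def, Subgroup.mem_map] at hxT
          obtain ⟨t0, ht0, rfl⟩ := hxT
          have h1 : t0 ∈ U' := by rw [hU'_def, Subgroup.mem_subgroupOf]; exact hxU
          have h2 : t0 = 1 := Subgroup.disjoint_def.mp hT₀.disjoint h1 ht0
          rw [h2]
          exact map_one _
        have hTcard : Nat.card T ∣ Nat.card Kb := hinjρ T (hTLC.trans inf_le_left) hTU
        have hTpiNat : PiNat π (Nat.card T) := fun s hs hsd => hKbmax.1 s hs (hsd.trans hTcard)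
        have hmemT : ∀ x : Gstar, x ∈ LC → PiNat π (orderOf x) → x ∈ T := by
          intro x hxLC hord
          obtain ⟨⟨u', t'⟩, hprod⟩ :=
            (Subgroup.IsComplement.existsUnique hT₀ (⟨x, hxLC⟩ : ↥LC)).exists
          have huU : ((u' : ↥LC) : Gstar) ∈ U := u'.2
          have htT : ((t' : ↥LC) : Gstar) ∈ T := ⟨(t' : ↥LC), t'.2, rfl⟩
          set u : Gstar := ((u' : ↥LC) : Gstar)
          set t : Gstar := ((t' : ↥LC) : Gstar)
          have hxut : x = u * t := by
            have h1 := congrArg (fun z : ↥LC => (z : Gstar)) hprod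
            simpa using h1.symm
          have htC : t ∈ C := (Subgroup.mem_inf.mp (hTLC htT)).2
          have hcomm_ut : Commute u t := Subgroup.mem_centralizer_iff.mp htC u huU
          have hx1 : x ^ orderOf x = 1 := pow_orderOf_eq_one x
          have hx2 : u ^ orderOf x * t ^ orderOf x = 1 := by
            rw [← hcomm_ut.mul_pow, ← hxut]
            exact hx1
          have hx3 : u ^ orderOf x = (t ^ orderOf x)⁻¹ := eq_inv_of_mul_eq_one_left hx2
          have hx4 : u ^ orderOf x ∈ T := by
            rw [hx3]
            exact T.inv_mem (T.pow_mem htT _)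
          have hx5 : u ^ orderOf x ∈ T ⊓ U := Subgroup.mem_inf.mpr ⟨hx4, U.pow_mem huU _⟩
          rw [hTU, Subgroup.mem_bot] at hx5
          have hx6 : orderOf u ∣ orderOf x := orderOf_dvd_of_pow_eq_one hx5
          have hx7 : orderOf u ∣ r := orderOf_dvd_of_pow_eq_one (hUexp u huU)
          have hu1 : u = 1 := by
            by_contra hune
            have h8 : orderOf u ≠ 1 := fun h9 => hune (orderOf_eq_one_iff.mp h9)
            have h10 : orderOf u = r := ((Nat.dvd_prime hr).mp hx7).resolve_left h8
            have h11 : r ∣ orderOf x := h10 ▸ hx6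
            exact hrπ (hord r hr h11)
          rw [hxut, hu1, one_mul]
          exact htT
        have hTnormL : ∀ l ∈ L, ∀ t ∈ T, l * t * l⁻¹ ∈ T := by
          intro l hl t ht
          have htLC : t ∈ LC := hTLC ht
          have hconjLC : l * t * l⁻¹ ∈ LC := by
            rw [hLC_def, Subgroup.mem_inf]
            constructor
            · have htL : t ∈ L := (Subgroup.mem_inf.mp htLC).1
              rw [hL_def, Subgroup.mem_comap] at hl htL ⊢
              rw [map_mul, map_mul, map_inv]
              exact Kb.mul_mem (Kb.mul_mem hl htL) (Kb.inv_mem hl)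
            · exact hCn.conj_mem t (Subgroup.mem_inf.mp htLC).2 l
          have hordconj : orderOf (l * t * l⁻¹) = orderOf t := by
            have h1 := orderOf_injective (MulAut.conj l).toMonoidHom
              (MulAut.conj l).injective t
            have h2 : (MulAut.conj l).toMonoidHom t = l * t * l⁻¹ := by
              simp [MulAut.conj_apply]
            rw [h2] at h1
            exact h1
          apply hmemT _ hconjLC
          rw [hordconj]
          intro s hs hsd
          exact hTpiNat s hs (hsd.trans (Subgroup.orderOf_dvd_natCard T ht))
        set Msub : Subgroup Gstar := ε.range ⊓ L with hM_def
        have hMLC : Msub ≤ LC := le_inf inf_le_right (inf_le_left.trans hrangeC)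
        have hMU : Msub ⊓ U = ⊥ := by
          rw [Subgroup.eq_bot_iff_forall]
          intro x hx
          rw [Subgroup.mem_inf] at hx
          have h1 : x ∈ U ⊓ ε.range :=
            Subgroup.mem_inf.mpr ⟨hx.2, (Subgroup.mem_inf.mp hx.1).1⟩
          rw [hUR, Subgroup.mem_bot] at h1
          exact h1
        have hMcard : Nat.card Msub ∣ Nat.card Kb := hinjρ Msub inf_le_right hMU
        have hMT : Msub ≤ T := by
          intro x hx
          apply hmemT x (hMLC hx)
          intro s hs hsd
          exact hKbmax.1 s hs ((hsd.trans (Subgroup.orderOf_dvd_natCard Msub hx)).trans hMcard)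
        have hTL : T ≤ L := hTLC.trans inf_le_left
        set K' : Subgroup ↥L := K.subgroupOf L with hK'_def
        set T' : Subgroup ↥L := T.subgroupOf L with hT'_def
        haveI hT'n : T'.Normal := by
          constructor
          intro n hn g
          rw [hT'_def, Subgroup.mem_subgroupOf] at hn ⊢
          exact hTnormL (g : Gstar) g.2 _ hn
        have hK'pi : IsPiGroup π K' := isPiGroup_of_card_dvd hK.1 (card_subgroupOf hKL).dvd
        have hT'pi : IsPiGroup π T' := by
          intro s hs hsd
          rw [hT'_def, card_subgroupOf hTL] at hsd
          exact hTpiNat s hs hsd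
        have hsup'pi : IsPiGroup π (K' ⊔ T') := pi_sup_normal K' T' hK'pi hT'pi
        have hmapsup : (K' ⊔ T').map L.subtype = K ⊔ T := by
          rw [Subgroup.map_sup, hK'_def, hT'_def, Subgroup.subgroupOf_map_subtype,
            Subgroup.subgroupOf_map_subtype, inf_eq_left.mpr hKL, inf_eq_left.mpr hTL]
        have hKTpi : IsPiGroup π (K ⊔ T) := by
          rw [← hmapsup]
          exact isPiGroup_of_card_dvd hsup'pi
            (card_map_of_injective _ L.subtype Subtype.coe_injective).dvd
        have hKT : K ⊔ T = K := hK.2 (K ⊔ T) hKTpi le_sup_left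
        have hTK : T ≤ K := by rw [← hKT]; exact le_sup_right
        have heq' : H.map ε' = ε'.range ⊓ Kb := by
          ext y
          rw [Subgroup.mem_inf]
          constructor
          · rintro ⟨h, hh, rfl⟩
            constructor
            · exact ⟨h, rfl⟩
            · have h1 : ε h ∈ H.map ε := ⟨h, hh, rfl⟩
              rw [heq, Subgroup.mem_inf] at h1
              exact hKKb ⟨ε h, h1.2, rfl⟩
          · rintro ⟨⟨g, rfl⟩, hyKb⟩
            have hgL : ε g ∈ L := by
              rw [hL_def, Subgroup.mem_comap]
              exact hyKb
            have h1 : ε g ∈ Msub := Subgroup.mem_inf.mpr ⟨⟨g, rfl⟩, hgL⟩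
            have h2 : ε g ∈ ε.range ⊓ K := Subgroup.mem_inf.mpr ⟨⟨g, rfl⟩, hTK (hMT h1)⟩
            rw [← heq] at h2
            obtain ⟨h, hh, hεh⟩ := h2
            refine ⟨h, hh, ?_⟩
            show ρ (ε h) = ρ (ε g)
            rw [hεh]
        let w2 : PiSubmaximalWitness π G H :=
          { carrier := Gstar ⧸ U
            grp := inferInstance
            fin := inferInstance
            ε := ε'
            inj := hinj'
            subnormal := hsub'
            K := Kb
            maxK := hKbmax
            eq := heq' }
        have hle : Nat.card Gstar ≤ Nat.card (Gstar ⧸ U) := hmin w2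
        have hcardGstar : Nat.card Gstar = Nat.card (Gstar ⧸ U) * Nat.card U :=
          Subgroup.card_eq_card_quotient_mul_card_subgroup U
        have hUcard2 : 2 ≤ Nat.card U := (Subgroup.one_lt_card_iff_ne_bot U).mpr hU.2.1
        have hQpos : 0 < Nat.card (Gstar ⧸ U) := Nat.card_pos
        have h5 : Nat.card (Gstar ⧸ U) * 2 ≤ Nat.card Gstar := by
          rw [hcardGstar]
          exact Nat.mul_le_mul_left _ hUcard2
        omega

    · -- Case I : U ≤ W is a p-group
      have hUWn : (U ⊓ W).Normal := by
        haveI hWN : W.Normal := normalIn_top_iff.mp hWnorm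
        constructor
        intro a ha g
        rw [Subgroup.mem_inf] at ha ⊢
        exact ⟨hUn.conj_mem a ha.1 g, hWN.conj_mem a ha.2 g⟩
      have hUWU : U ⊓ W = U := (hU.2.2 (U ⊓ W) hUWn inf_le_left).resolve_left hUW
      have hUle : U ≤ W := by rw [← hUWU]; exact inf_le_right
      exact isPiGroup_of_isPGroup hp hpπ (hWp.to_le hUle)
  exact ⟨hUpi, normal_pi_le_piMaximal hUn hUpi hK⟩
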